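/- Let X be a random vector in ℝ² whose law is rotation invariant, with E‖X‖₂ < ∞ and X ≠ 0 almost surely, and let β̃, β* ∈ ℝ² be nonzero with angle θ = θ(β̃, β*). Then E[ |⟨β*, X⟩| · 1{ sign⟨β̃, X⟩ ≠ sign⟨β*, X⟩ } ] = (1/π) · ( ∫₀^θ sin t dt ) · ‖β*‖₂ · E‖X‖₂ = (1/π)(1 − cos θ) · ‖β*‖₂ · E‖X‖₂. -/

import Mathlib

open MeasureTheory RealInnerProductSpace intervalIntegral

/-- sign: `1` if `z > 0`, `-1` if `z ≤ 0`. -/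
noncomputable def sgn (z : ℝ) : ℝ := if 0 < z then 1 else -1

section Auxiliary

open Real Set

lemma sgn_of_pos {x : ℝ} (h : 0 < x) : sgn x = 1 := if_pos h
lemma sgn_of_nonpos {x : ℝ} (h : x ≤ 0) : sgn x = -1 := if_neg (not_lt.2 h)
lemma sgn_const_mul {c : ℝ} (hc : 0 < c) (x : ℝ) : sgn (c * x) = sgn x := by
  unfold sgn
  simp [mul_pos_iff_of_pos_left, hc]
lemma measurable_sgn : Measurable sgn :=
  Measurable.ite (measurableSet_lt measurable_const measurable_id) measurable_const measurable_const

noncomputable def Hfun (θ : ℝ) : ℝ → ℝ :=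
  fun u => |Real.cos u| * Set.indicator {u : ℝ | sgn (Real.cos (u - θ)) ≠ sgn (Real.cos u)} (fun _ => (1:ℝ)) u

lemma Hfun_nonneg (θ u : ℝ) : 0 ≤ Hfun θ u := by
  unfold Hfun
  apply mul_nonneg (abs_nonneg _)
  exact Set.indicator_nonneg (fun _ _ => zero_le_one) u

lemma indicator_le_one' {α : Type*} (S : Set α) (u : α) : Set.indicator S (fun _ => (1:ℝ)) u ≤ 1 := by
  classical
  rw [Set.indicator_apply]
  split <;> norm_num

lemma Hfun_le_one (θ u : ℝ) : Hfun θ u ≤ 1 := by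
  unfold Hfun
  calc |Real.cos u| * _ ≤ 1 * 1 := by
        apply mul_le_mul (Real.abs_cos_le_one u) (indicator_le_one' _ u)
          (Set.indicator_nonneg (fun _ _ => zero_le_one) u) zero_le_one
    _ = 1 := one_mul 1

lemma measurable_Hfun (θ : ℝ) : Measurable (Hfun θ) := by
  unfold Hfun
  apply (Real.continuous_cos.abs.measurable).mul
  apply Measurable.indicator measurable_const
  exact (measurableSet_eq_fun
    (measurable_sgn.comp (Real.continuous_cos.measurable.comp (measurable_id.sub measurable_const)))
    (measurable_sgn.comp Real.continuous_cos.measurable)).compl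

lemma intervalIntegrable_Hfun (θ a b : ℝ) : IntervalIntegrable (Hfun θ) volume a b := by
  rw [intervalIntegrable_iff]
  apply Integrable.mono' (integrableOn_const (C := (1:ℝ)) measure_Ioc_lt_top.ne) (measurable_Hfun θ).aestronglyMeasurable
  exact Filter.Eventually.of_forall fun u => by
    rw [Real.norm_eq_abs, abs_of_nonneg (Hfun_nonneg θ u)]; exact Hfun_le_one θ u

lemma Hfun_of_cos_eq_zero {θ u : ℝ} (h : Real.cos u = 0) : Hfun θ u = 0 := by
  unfold Hfun; rw [h]; simp

lemma Hfun_of_ne {θ u : ℝ} (h : sgn (Real.cos (u - θ)) ≠ sgn (Real.cos u)) :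
    Hfun θ u = |Real.cos u| := by
  unfold Hfun; rw [Set.indicator_of_mem, mul_one]; exact h

lemma Hfun_of_eq {θ u : ℝ} (h : sgn (Real.cos (u - θ)) = sgn (Real.cos u)) :
    Hfun θ u = 0 := by
  unfold Hfun
  rw [Set.indicator_of_notMem (by simpa using h), mul_zero]

lemma ae_ne_point (c : ℝ) : ∀ᵐ u : ℝ, u ≠ c := by
  rw [ae_iff]
  simp only [ne_eq, not_not, Set.setOf_eq_eq_singleton]
  exact Real.volume_singleton
lemma Hfun_integral (θ : ℝ) (h0 : 0 ≤ θ) (hπ : θ ≤ π) :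
    ∫ u in (-(π/2))..(3*(π/2)), Hfun θ u = 2 * (1 - Real.cos θ) := by
  have hpi := Real.pi_pos
  have hle1 : -(π/2) ≤ θ - π/2 := by linarith
  have hle2 : θ - π/2 ≤ π/2 := by linarith
  have hle3 : (π/2 : ℝ) ≤ θ + π/2 := by linarith
  have hle4 : θ + π/2 ≤ 3*(π/2) := by linarith
  rw [← integral_add_adjacent_intervals (intervalIntegrable_Hfun θ _ (θ - π/2)) (intervalIntegrable_Hfun θ _ _),
      ← integral_add_adjacent_intervals (intervalIntegrable_Hfun θ (θ - π/2) (π/2)) (intervalIntegrable_Hfun θ _ _),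
      ← integral_add_adjacent_intervals (intervalIntegrable_Hfun θ (π/2) (θ + π/2)) (intervalIntegrable_Hfun θ _ _)]
  have h1 : ∫ u in (-(π/2))..(θ - π/2), Hfun θ u = 1 - Real.cos θ := by
    rw [integral_congr (g := Real.cos) ?_, integral_cos]
    · rw [Real.sin_sub_pi_div_two]
      simp [Real.sin_neg, Real.sin_pi_div_two]
      ring
    · intro u hu
      rw [Set.uIcc_of_le hle1] at hu
      obtain ⟨hu1, hu2⟩ := hu
      have hcos : 0 ≤ Real.cos u := Real.cos_nonneg_of_mem_Icc ⟨hu1, by linarith⟩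
      rcases eq_or_lt_of_le hcos with h | h
      · rw [Hfun_of_cos_eq_zero h.symm]; exact h
      · have hneg : Real.cos (u - θ) ≤ 0 := by
          rw [show u - θ = -(θ - u) by ring, Real.cos_neg]
          exact Real.cos_nonpos_of_pi_div_two_le_of_le (by linarith) (by linarith)
        rw [Hfun_of_ne (by rw [sgn_of_nonpos hneg, sgn_of_pos h]; norm_num), abs_of_pos h]
  have h2 : ∫ u in (θ - π/2)..(π/2), Hfun θ u = 0 := by
    rw [show (0:ℝ) = ∫ u in (θ - π/2)..(π/2), (0:ℝ) from intervalIntegral.integral_zero.symm]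
    apply intervalIntegral.integral_congr_ae
    apply Filter.Eventually.of_forall
    intro u hu
    rw [Set.uIoc_of_le hle2] at hu
    obtain ⟨hu1, hu2⟩ := hu
    rcases eq_or_ne (Real.cos u) 0 with h | h
    · exact Hfun_of_cos_eq_zero h
    · have hcos : 0 < Real.cos u :=
        (Real.cos_nonneg_of_mem_Icc ⟨by linarith, hu2⟩).lt_of_ne (Ne.symm h)
      have hcos2 : 0 < Real.cos (u - θ) := by
        rcases eq_or_lt_of_le (show u - θ ≤ π/2 by linarith) with he | hlt
        · exfalso
          have : u = θ + π/2 := by linarith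
          have hθ0 : θ ≤ 0 := by linarith
          have hθ0' : θ = 0 := le_antisymm hθ0 h0
          apply h
          rw [this, hθ0']
          simpa using Real.cos_pi_div_two
        · exact Real.cos_pos_of_mem_Ioo ⟨by linarith, hlt⟩
      exact Hfun_of_eq (by rw [sgn_of_pos hcos, sgn_of_pos hcos2])
  have h3 : ∫ u in (π/2)..(θ + π/2), Hfun θ u = 1 - Real.cos θ := by
    have : ∫ u in (π/2)..(θ + π/2), Hfun θ u = ∫ u in (π/2)..(θ + π/2), -Real.cos u := by
      apply intervalIntegral.integral_congr_ae
      filter_upwards [ae_ne_point (θ + π/2)] with u hne hu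
      rw [Set.uIoc_of_le hle3] at hu
      obtain ⟨hu1, hu2⟩ := hu
      have hu2' : u < θ + π/2 := lt_of_le_of_ne hu2 hne
      have hcos : Real.cos u < 0 :=
        Real.cos_neg_of_pi_div_two_lt_of_lt hu1 (by linarith)
      have hcos2 : 0 < Real.cos (u - θ) :=
        Real.cos_pos_of_mem_Ioo ⟨by linarith, by linarith⟩
      rw [Hfun_of_ne (by rw [sgn_of_pos hcos2, sgn_of_nonpos hcos.le]; norm_num),
        abs_of_neg hcos]
    rw [this, intervalIntegral.integral_neg, integral_cos, Real.sin_add_pi_div_two, Real.sin_pi_div_two]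
    ring
  have h4 : ∫ u in (θ + π/2)..(3*(π/2)), Hfun θ u = 0 := by
    rw [show (0:ℝ) = ∫ u in (θ + π/2)..(3*(π/2)), (0:ℝ) from intervalIntegral.integral_zero.symm]
    apply intervalIntegral.integral_congr_ae
    apply Filter.Eventually.of_forall
    intro u hu
    rw [Set.uIoc_of_le hle4] at hu
    obtain ⟨hu1, hu2⟩ := hu
    rcases eq_or_ne (Real.cos u) 0 with h | h
    · exact Hfun_of_cos_eq_zero h
    · have hcos : Real.cos u < 0 :=
        (Real.cos_nonpos_of_pi_div_two_le_of_le (by linarith) (by linarith)).lt_of_ne h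
      have hcos2 : Real.cos (u - θ) ≤ 0 :=
        Real.cos_nonpos_of_pi_div_two_le_of_le (by linarith) (by linarith)
      exact Hfun_of_eq (by rw [sgn_of_nonpos hcos2, sgn_of_nonpos hcos.le])
  rw [h1, h2, h3, h4]
  ring
lemma Hfun_periodic (θ : ℝ) : Function.Periodic (Hfun θ) (2*π) := by
  intro u
  unfold Hfun
  rw [Set.indicator_apply, Set.indicator_apply]
  simp only [Set.mem_setOf_eq, show u + 2*π - θ = (u - θ) + 2*π by ring, Real.cos_add_two_pi]

lemma Hfun_shift (θ ψ : ℝ) (h0 : 0 ≤ θ) (hπ : θ ≤ π) :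
    ∫ φ in (0:ℝ)..(2*π), Hfun θ (φ + ψ) = 2 * (1 - Real.cos θ) := by
  rw [integral_comp_add_right (Hfun θ) ψ, zero_add, show 2*π + ψ = ψ + 2*π by ring,
    (Hfun_periodic θ).intervalIntegral_add_eq ψ (-(π/2)),
    show -(π/2) + 2*π = 3*(π/2) by ring]
  exact Hfun_integral θ h0 hπ
lemma exp_mul_apply (z : ℂ) (x : ℝ) :
    Complex.exp (x*Complex.I) * z
      = ((‖z‖ : ℝ) : ℂ) * Complex.exp (((x + Complex.arg z : ℝ) : ℂ)*Complex.I) := by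
  conv_lhs => rw [← Complex.norm_mul_exp_arg_mul_I z]
  rw [show (((x + Complex.arg z : ℝ)) : ℂ)*Complex.I
      = (x:ℂ)*Complex.I + (Complex.arg z : ℂ)*Complex.I by push_cast; ring,
    Complex.exp_add]
  ring

lemma re_exp_mul (z : ℂ) (x : ℝ) :
    (Complex.exp (x*Complex.I) * z).re = ‖z‖ * Real.cos (x + Complex.arg z) := by
  rw [exp_mul_apply z x, Complex.re_ofReal_mul, Complex.exp_ofReal_mul_I_re]

lemma conj_exp_mul (c θ : ℝ) (z : ℂ) (φ : ℝ) :
    ((starRingEnd ℂ) ((c:ℂ) * Complex.exp ((θ:ℂ)*Complex.I)) * (Complex.exp ((φ:ℂ)*Complex.I) * z)).re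
      = c * ‖z‖ * Real.cos (φ + Complex.arg z - θ) := by
  rw [exp_mul_apply z φ, map_mul, Complex.conj_ofReal, ← Complex.exp_conj]
  have hconj : (starRingEnd ℂ) ((θ:ℂ)*Complex.I) = ((-θ:ℝ):ℂ) * Complex.I := by
    rw [map_mul, Complex.conj_ofReal, Complex.conj_I]; push_cast; ring
  rw [hconj,
    show ((c:ℂ) * Complex.exp (((-θ:ℝ):ℂ) * Complex.I) * (((‖z‖ : ℝ) : ℂ) * Complex.exp (((φ + Complex.arg z : ℝ):ℂ) * Complex.I)) : ℂ)
      = ((c * ‖z‖ : ℝ):ℂ) * Complex.exp (((φ + Complex.arg z - θ : ℝ):ℂ) * Complex.I) from by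
      rw [show ((φ + Complex.arg z - θ : ℝ):ℂ) * Complex.I
          = ((-θ:ℝ):ℂ)*Complex.I + ((φ + Complex.arg z : ℝ):ℂ)*Complex.I by push_cast; ring,
        Complex.exp_add]
      push_cast
      ring,
    Complex.re_ofReal_mul, Complex.exp_ofReal_mul_I_re]

lemma innerB (θ s c : ℝ) (h0 : 0 ≤ θ) (hπ : θ ≤ π) (hs : 0 < s) (hc : 0 < c)
    (z : ℂ) (hz : z ≠ 0) :
    ∫ φ in (0:ℝ)..(2*π),
      |s * (Complex.exp ((φ:ℂ)*Complex.I) * z).re| *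
        Set.indicator {w : ℂ | sgn (((starRingEnd ℂ) ((c:ℂ) * Complex.exp ((θ:ℂ)*Complex.I)) * w).re) ≠ sgn (s * w.re)}
          (fun _ => (1:ℝ)) (Complex.exp ((φ:ℂ)*Complex.I) * z)
      = s * ‖z‖ * (2 * (1 - Real.cos θ)) := by
  have hr : 0 < ‖z‖ := norm_pos_iff.mpr hz
  have key : ∀ φ : ℝ,
      |s * (Complex.exp ((φ:ℂ)*Complex.I) * z).re| *
        Set.indicator {w : ℂ | sgn (((starRingEnd ℂ) ((c:ℂ) * Complex.exp ((θ:ℂ)*Complex.I)) * w).re) ≠ sgn (s * w.re)}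
          (fun _ => (1:ℝ)) (Complex.exp ((φ:ℂ)*Complex.I) * z)
      = (s * ‖z‖) * Hfun θ (φ + Complex.arg z) := by
    intro φ
    rw [Set.indicator_apply]
    unfold Hfun
    rw [Set.indicator_apply]
    simp only [Set.mem_setOf_eq, conj_exp_mul c θ z φ, re_exp_mul z φ]
    simp only [← mul_assoc]
    simp only [sgn_const_mul (show (0:ℝ) < s * ‖z‖ by positivity),
      sgn_const_mul (show (0:ℝ) < c * ‖z‖ by positivity)]
    rw [abs_mul, abs_of_pos (show (0:ℝ) < s * ‖z‖ by positivity)]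
  rw [intervalIntegral.integral_congr (fun φ _ => key φ), intervalIntegral.integral_const_mul,
    Hfun_shift θ (Complex.arg z) h0 hπ]
end Auxiliary

/-- Exact excess classification risk in the rotation-invariant planar case:
`E[|⟨β*,X⟩| 𝟙{sign⟨β̃,X⟩ ≠ sign⟨β*,X⟩}] = (1/π)(∫₀^θ sin t dt)‖β*‖₂ E‖X‖₂
 = (1/π)(1 − cos θ)‖β*‖₂ E‖X‖₂`. -/
theorem excess_risk_rotation_invariant_exact {Ω : Type*} [MeasurableSpace Ω]
    (P : Measure Ω) [IsProbabilityMeasure P]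
    (X : Ω → EuclideanSpace ℝ (Fin 2)) (hX : Measurable X)
    (hrot : ∀ R : EuclideanSpace ℝ (Fin 2) ≃ₗᵢ[ℝ] EuclideanSpace ℝ (Fin 2),
      Measure.map (fun ω => R (X ω)) P = Measure.map X P)
    (hint : Integrable (fun ω => ‖X ω‖) P)
    (hne : ∀ᵐ ω ∂P, X ω ≠ 0)
    (βt βs : EuclideanSpace ℝ (Fin 2)) (hβt : βt ≠ 0) (hβs : βs ≠ 0) :
    (∫ ω, |⟪βs, X ω⟫| *
        Set.indicator {ω | sgn ⟪βt, X ω⟫ ≠ sgn ⟪βs, X ω⟫} (fun _ => (1 : ℝ)) ω ∂P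
      = (1 / Real.pi) *
          (∫ t in (0 : ℝ)..Real.arccos (⟪βt, βs⟫ / (‖βt‖ * ‖βs‖)), Real.sin t) *
          ‖βs‖ * ∫ ω, ‖X ω‖ ∂P) ∧
    (∫ ω, |⟪βs, X ω⟫| *
        Set.indicator {ω | sgn ⟪βt, X ω⟫ ≠ sgn ⟪βs, X ω⟫} (fun _ => (1 : ℝ)) ω ∂P
      = (1 / Real.pi) * (1 - Real.cos (Real.arccos (⟪βt, βs⟫ / (‖βt‖ * ‖βs‖)))) *
          ‖βs‖ * ∫ ω, ‖X ω‖ ∂P) := by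
  have hsin : ∫ t in (0 : ℝ)..Real.arccos (⟪βt, βs⟫ / (‖βt‖ * ‖βs‖)), Real.sin t
      = 1 - Real.cos (Real.arccos (⟪βt, βs⟫ / (‖βt‖ * ‖βs‖))) := by
    rw [integral_sin, Real.cos_zero]
  rw [hsin, and_self]
  set θ := Real.arccos (⟪βt, βs⟫ / (‖βt‖ * ‖βs‖)) with hθdef
  have hθ0 : 0 ≤ θ := Real.arccos_nonneg _
  have hθπ : θ ≤ Real.pi := Real.arccos_le_pi _
  have hπ := Real.pi_pos
  set L : ℂ ≃ₗᵢ[ℝ] EuclideanSpace ℝ (Fin 2) :=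
    Complex.isometryOfOrthonormal (EuclideanSpace.basisFun (Fin 2) ℝ) with hL
  set Y : Ω → ℂ := fun ω => L.symm (X ω) with hYdef
  have hY : Measurable Y := L.symm.continuous.measurable.comp hX
  set ν : Measure ℂ := Measure.map Y P with hνdef
  have hνprob : IsProbabilityMeasure ν := Measure.isProbabilityMeasure_map hY.aemeasurable
  -- invariance of ν under all linear isometries of ℂ
  have hinv : ∀ S : ℂ ≃ₗᵢ[ℝ] ℂ, Measure.map S ν = ν := by
    intro S
    have hcomp : (⇑S ∘ Y) = (⇑L.symm ∘ fun ω => (L.symm.trans (S.trans L)) (X ω)) := by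
      funext ω
      simp [hYdef, LinearIsometryEquiv.trans_apply]
    calc Measure.map (⇑S) ν = Measure.map (⇑S ∘ Y) P := Measure.map_map S.continuous.measurable hY
      _ = Measure.map (⇑L.symm ∘ fun ω => (L.symm.trans (S.trans L)) (X ω)) P := by rw [hcomp]
      _ = Measure.map (⇑L.symm) (Measure.map (fun ω => (L.symm.trans (S.trans L)) (X ω)) P) :=
          (Measure.map_map L.symm.continuous.measurable
            ((L.symm.trans (S.trans L)).continuous.measurable.comp hX)).symm
      _ = Measure.map (⇑L.symm) (Measure.map X P) := by rw [hrot]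
      _ = Measure.map (⇑L.symm ∘ X) P := Measure.map_map L.symm.continuous.measurable hX
      _ = ν := rfl
  set bs : ℂ := L.symm βs with hbs
  set bt : ℂ := L.symm βt with hbt
  have hbsn : ‖bs‖ = ‖βs‖ := L.symm.norm_map βs
  have hbtn : ‖bt‖ = ‖βt‖ := L.symm.norm_map βt
  have hbs0 : bs ≠ 0 := by
    simp only [hbs, ne_eq, LinearIsometryEquiv.map_eq_zero_iff]; exact hβs
  have hbt0 : bt ≠ 0 := by
    simp only [hbt, ne_eq, LinearIsometryEquiv.map_eq_zero_iff]; exact hβt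
  have hβsn : (0:ℝ) < ‖βs‖ := norm_pos_iff.2 hβs
  have hβtn : (0:ℝ) < ‖βt‖ := norm_pos_iff.2 hβt
  -- construct the isometry `S` normalizing `βs` and `βt`
  obtain ⟨S, hSbs, hSbt⟩ : ∃ S : ℂ ≃ₗᵢ[ℝ] ℂ, S bs = ((‖βs‖:ℝ):ℂ) ∧ 0 ≤ (S bt).im := by
    set a : Circle := Circle.exp (-(Complex.arg bs)) with ha
    have habs : ‖bs‖ = ‖βs‖ := by rw [← hbsn]
    have h1 : rotation a bs = ((‖βs‖:ℝ):ℂ) := by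
      rw [rotation_apply, ha, Circle.coe_exp, exp_mul_apply bs (-(Complex.arg bs)),
        show (-(Complex.arg bs) + Complex.arg bs : ℝ) = 0 by ring]
      simp [habs]
    by_cases him : 0 ≤ (rotation a bt).im
    · exact ⟨rotation a, h1, him⟩
    · refine ⟨(rotation a).trans Complex.conjLIE, ?_, ?_⟩
      · simp only [LinearIsometryEquiv.trans_apply, h1]
        exact Complex.conj_ofReal _
      · simp only [LinearIsometryEquiv.trans_apply]
        rw [show Complex.conjLIE ((rotation a) bt) = (starRingEnd ℂ) ((rotation a) bt) from rfl,
          Complex.conj_im]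
        linarith [not_le.1 him]
  set b : ℂ := S bt with hbdef
  have hbabs : ‖b‖ = ‖βt‖ := by
    rw [hbdef, S.norm_map, hbtn]
  have hb0 : b ≠ 0 := by
    simp only [hbdef, ne_eq, LinearIsometryEquiv.map_eq_zero_iff]; exact hbt0
  have hinner : ⟪βt, βs⟫ = b.re * ‖βs‖ := by
    have h1 : ⟪βt, βs⟫ = ⟪bt, bs⟫ := (L.symm.inner_map_map βt βs).symm
    have h2 : ⟪bt, bs⟫ = ⟪b, ((‖βs‖:ℝ):ℂ)⟫ := by
      rw [hbdef, ← hSbs, S.inner_map_map]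
    rw [h1, h2, Complex.inner]
    simp [Complex.mul_re, Complex.conj_re, Complex.conj_im]
    ring
  have hθb : θ = Complex.arg b := by
    have hx : ⟪βt, βs⟫ / (‖βt‖ * ‖βs‖) = b.re / ‖b‖ := by
      rw [hinner, hbabs]
      field_simp
    rw [hθdef, hx, ← Complex.arg_of_im_nonneg_of_ne_zero hSbt hb0]
  have hbpolar : b = ((‖βt‖:ℝ):ℂ) * Complex.exp ((θ:ℂ)*Complex.I) := by
    conv_lhs => rw [← Complex.norm_mul_exp_arg_mul_I b]
    rw [hbabs, ← hθb]
  -- the function G on ℂ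
  set G : ℂ → ℝ := fun w => |‖βs‖ * w.re| *
    Set.indicator {w : ℂ | sgn (((starRingEnd ℂ) (((‖βt‖:ℝ):ℂ) * Complex.exp ((θ:ℂ)*Complex.I)) * w).re)
      ≠ sgn (‖βs‖ * w.re)} (fun _ => (1:ℝ)) w with hGdef
  have hGmeas : Measurable G := by
    rw [hGdef]
    apply ((measurable_const.mul Complex.measurable_re).abs).mul
    apply Measurable.indicator measurable_const
    exact (measurableSet_eq_fun
      (measurable_sgn.comp (Complex.measurable_re.comp (measurable_const.mul measurable_id)))
      (measurable_sgn.comp (measurable_const.mul Complex.measurable_re))).compl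
  -- the original integral equals ∫ G dν
  have hmain1 : ∫ ω, |⟪βs, X ω⟫| *
      Set.indicator {ω | sgn ⟪βt, X ω⟫ ≠ sgn ⟪βs, X ω⟫} (fun _ => (1 : ℝ)) ω ∂P
      = ∫ w, G w ∂ν := by
    have hF1meas : Measurable (fun w : ℂ => |⟪bs, w⟫| *
        Set.indicator {w : ℂ | sgn ⟪bt, w⟫ ≠ sgn ⟪bs, w⟫} (fun _ => (1:ℝ)) w) := by
      have hin : ∀ c : ℂ, Measurable (fun w : ℂ => ⟪c, w⟫) := fun c =>
        (continuous_const.inner continuous_id).measurable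
      apply ((hin bs).abs).mul
      apply Measurable.indicator measurable_const
      exact (measurableSet_eq_fun (measurable_sgn.comp (hin bt))
        (measurable_sgn.comp (hin bs))).compl
    have step1 : ∫ ω, |⟪βs, X ω⟫| *
        Set.indicator {ω | sgn ⟪βt, X ω⟫ ≠ sgn ⟪βs, X ω⟫} (fun _ => (1 : ℝ)) ω ∂P
        = ∫ w, (fun w : ℂ => |⟪bs, w⟫| *
            Set.indicator {w : ℂ | sgn ⟪bt, w⟫ ≠ sgn ⟪bs, w⟫} (fun _ => (1:ℝ)) w) w ∂ν := by
      rw [hνdef, integral_map hY.aemeasurable hF1meas.aestronglyMeasurable]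
      congr 1
      funext ω
      rw [Set.indicator_apply, Set.indicator_apply]
      simp only [Set.mem_setOf_eq, hbs, hbt, hYdef, LinearIsometryEquiv.inner_map_map]
    have step2 : ∫ w, (fun w : ℂ => |⟪bs, w⟫| *
          Set.indicator {w : ℂ | sgn ⟪bt, w⟫ ≠ sgn ⟪bs, w⟫} (fun _ => (1:ℝ)) w) w ∂ν
        = ∫ w, (fun w : ℂ => |⟪bs, w⟫| *
            Set.indicator {w : ℂ | sgn ⟪bt, w⟫ ≠ sgn ⟪bs, w⟫} (fun _ => (1:ℝ)) w) (S.symm w) ∂ν := by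
      conv_lhs => rw [← hinv S.symm]
      rw [integral_map S.symm.continuous.measurable.aemeasurable hF1meas.aestronglyMeasurable]
    have hkey_s : ∀ w : ℂ, ⟪bs, S.symm w⟫ = ‖βs‖ * w.re := by
      intro w
      rw [← S.inner_map_eq_flip bs w, hSbs, Complex.inner, Complex.conj_ofReal,
        mul_comm w, Complex.re_ofReal_mul]
    have hkey_t : ∀ w : ℂ, ⟪bt, S.symm w⟫ =
        ((starRingEnd ℂ) (((‖βt‖:ℝ):ℂ) * Complex.exp ((θ:ℂ)*Complex.I)) * w).re := by
      intro w
      rw [← S.inner_map_eq_flip bt w, ← hbdef, ← hbpolar, Complex.inner, mul_comm w]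
    have step3 : ∀ w : ℂ, (fun w : ℂ => |⟪bs, w⟫| *
          Set.indicator {w : ℂ | sgn ⟪bt, w⟫ ≠ sgn ⟪bs, w⟫} (fun _ => (1:ℝ)) w) (S.symm w)
        = G w := by
      intro w
      simp only [hGdef]
      rw [Set.indicator_apply, Set.indicator_apply]
      simp only [Set.mem_setOf_eq, hkey_s, hkey_t]
    rw [step1, step2]
    exact MeasureTheory.integral_congr_ae (Filter.Eventually.of_forall step3)
  -- rotation invariance of the G-integral
  have hrotG : ∀ φ : ℝ, ∫ w, G w ∂ν = ∫ w, G (Complex.exp ((φ:ℂ)*Complex.I) * w) ∂ν := by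
    intro φ
    conv_lhs => rw [← hinv (rotation (Circle.exp φ))]
    rw [integral_map (rotation (Circle.exp φ)).continuous.measurable.aemeasurable
      hGmeas.aestronglyMeasurable]
    congr 1
  -- Fubini setup
  set μ₀ : Measure ℝ := volume.restrict (Set.Ioc (0:ℝ) (2*Real.pi)) with hμ₀def
  haveI hμ₀fin : IsFiniteMeasure μ₀ := ⟨by
    rw [hμ₀def, Measure.restrict_apply_univ]; exact measure_Ioc_lt_top⟩
  have hKcont : Continuous fun p : ℝ × ℂ => Complex.exp ((p.1:ℂ)*Complex.I) * p.2 :=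
    (Complex.continuous_exp.comp
      ((Complex.continuous_ofReal.comp continuous_fst).mul continuous_const)).mul continuous_snd
  have hKmeas : Measurable (Function.uncurry fun (φ:ℝ) (w:ℂ) =>
      G (Complex.exp ((φ:ℂ)*Complex.I) * w)) := hGmeas.comp hKcont.measurable
  have hGbound : ∀ w : ℂ, |G w| ≤ ‖βs‖ * ‖w‖ := by
    intro w
    simp only [hGdef]
    rw [abs_mul, abs_abs]
    calc |‖βs‖ * w.re| * |Set.indicator _ (fun _ => (1:ℝ)) w|
        ≤ |‖βs‖ * w.re| * 1 := by
          apply mul_le_mul_of_nonneg_left ?_ (abs_nonneg _)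
          rw [abs_of_nonneg (Set.indicator_nonneg (fun _ _ => zero_le_one) w)]
          exact indicator_le_one' _ w
      _ = ‖βs‖ * |w.re| := by rw [mul_one, abs_mul, abs_of_nonneg (norm_nonneg βs)]
      _ ≤ ‖βs‖ * ‖w‖ := by
          apply mul_le_mul_of_nonneg_left ?_ (norm_nonneg βs)
          exact Complex.abs_re_le_norm w
  have hνnorm : Integrable (fun w : ℂ => ‖w‖) ν := by
    rw [hνdef, integrable_map_measure measurable_norm.aestronglyMeasurable hY.aemeasurable]
    have : ((fun w : ℂ => ‖w‖) ∘ Y) = fun ω => ‖X ω‖ := by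
      funext ω
      simp [hYdef, Function.comp]
    rw [this]
    exact hint
  have hKint : Integrable (Function.uncurry fun (φ:ℝ) (w:ℂ) =>
      G (Complex.exp ((φ:ℂ)*Complex.I) * w)) (μ₀.prod ν) := by
    apply Integrable.mono' (g := fun p : ℝ × ℂ => ‖βs‖ * ‖p.2‖) ?_ hKmeas.aestronglyMeasurable ?_
    · rw [MeasureTheory.integrable_prod_iff
        (show AEStronglyMeasurable (fun p : ℝ × ℂ => ‖βs‖ * ‖p.2‖) (μ₀.prod ν) from
          (measurable_const.mul measurable_snd.norm).aestronglyMeasurable)]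
      constructor
      · exact Filter.Eventually.of_forall fun φ => hνnorm.const_mul _
      · have hc : (fun x : ℝ => ∫ y : ℂ, ‖‖βs‖ * ‖(x, y).2‖‖ ∂ν)
            = fun _ : ℝ => ∫ y : ℂ, ‖‖βs‖ * ‖y‖‖ ∂ν := rfl
        rw [hc]
        apply integrable_const
    · apply Filter.Eventually.of_forall
      rintro ⟨φ, w⟩
      calc ‖Function.uncurry (fun (φ:ℝ) (w:ℂ) => G (Complex.exp ((φ:ℂ)*Complex.I) * w)) (φ, w)‖
          = |G (Complex.exp ((φ:ℂ)*Complex.I) * w)| := rfl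
        _ ≤ ‖βs‖ * ‖Complex.exp ((φ:ℂ)*Complex.I) * w‖ := hGbound _
        _ = ‖βs‖ * ‖w‖ := by
            rw [norm_mul, Complex.norm_exp_ofReal_mul_I,
              one_mul]
  have hswap := MeasureTheory.integral_integral_swap
    (f := fun (φ:ℝ) (w:ℂ) => G (Complex.exp ((φ:ℂ)*Complex.I) * w)) hKint
  -- evaluate the left side of hswap
  have hLHS : ∫ φ, (∫ w, G (Complex.exp ((φ:ℂ)*Complex.I) * w) ∂ν) ∂μ₀
      = (2*Real.pi) * ∫ w, G w ∂ν := by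
    have h1 : ∀ φ : ℝ, ∫ w, G (Complex.exp ((φ:ℂ)*Complex.I) * w) ∂ν = ∫ w, G w ∂ν :=
      fun φ => (hrotG φ).symm
    rw [MeasureTheory.integral_congr_ae (Filter.Eventually.of_forall h1),
      MeasureTheory.integral_const,
      hμ₀def, measureReal_restrict_apply_univ, Real.volume_real_Ioc, sub_zero, smul_eq_mul,
      max_eq_left (by positivity : (0:ℝ) ≤ 2*Real.pi)]
  -- almost everywhere nonvanishing
  have hν0 : ∀ᵐ w ∂ν, w ≠ 0 := by
    have h0 : ∀ᵐ ω ∂P, Y ω ∉ ({0} : Set ℂ) := by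
      filter_upwards [hne] with ω h
      simp only [hYdef, Set.mem_singleton_iff, LinearIsometryEquiv.map_eq_zero_iff]
      exact h
    have h1 := (MeasureTheory.ae_map_iff hY.aemeasurable
      ((measurableSet_singleton (0:ℂ)).compl)).mpr h0
    filter_upwards [h1] with w hw
    simpa using hw
  -- evaluate the right side of hswap
  have hRHS : ∫ w, (∫ φ, G (Complex.exp ((φ:ℂ)*Complex.I) * w) ∂μ₀) ∂ν
      = (‖βs‖ * (2*(1 - Real.cos θ))) * ∫ w, ‖w‖ ∂ν := by
    have h1 : ∀ᵐ w ∂ν, (∫ φ, G (Complex.exp ((φ:ℂ)*Complex.I) * w) ∂μ₀)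
        = (‖βs‖ * (2*(1 - Real.cos θ))) * ‖w‖ := by
      filter_upwards [hν0] with w hw
      have h2 : (∫ φ, G (Complex.exp ((φ:ℂ)*Complex.I) * w) ∂μ₀)
          = ∫ φ in (0:ℝ)..(2*Real.pi), G (Complex.exp ((φ:ℂ)*Complex.I) * w) := by
        rw [hμ₀def, intervalIntegral.integral_of_le (by positivity)]
      rw [h2]
      have h3 := innerB θ ‖βs‖ ‖βt‖ hθ0 hθπ hβsn hβtn w hw
      simp only [hGdef]
      rw [h3]
      ring
    rw [MeasureTheory.integral_congr_ae h1, MeasureTheory.integral_const_mul]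
  have hmain2 : (2*Real.pi) * ∫ w, G w ∂ν
      = (‖βs‖ * (2*(1 - Real.cos θ))) * ∫ w, ‖w‖ ∂ν := by
    rw [← hLHS, hswap, hRHS]
  have hXnorm : ∫ w, ‖w‖ ∂ν = ∫ ω, ‖X ω‖ ∂P := by
    rw [hνdef, integral_map hY.aemeasurable measurable_norm.aestronglyMeasurable]
    congr 1
    funext ω
    simp [hYdef]
  rw [hmain1]
  rw [hXnorm] at hmain2
  have hπne : (Real.pi : ℝ) ≠ 0 := ne_of_gt hπ
  field_simp at hmain2 ⊢
  linarith [hmain2]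

-- #print axioms excess_risk_rotation_invariant_exact
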